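/- Let ℙ₀ be a probability measure on ℝ^D with ℙ₀(B(x,r)) ≤ κ₀·η(D)·r^D for every x ∈ ℝ^D, where η(D) is the volume of the unit ball. Let Y₁,…,Y_m be i.i.d. with law ℙ₀. Then for any r > 0, ℙ(‖Yⱼ − Yⱼ₊₁‖ ≤ r for all j = 1,…,m−1) ≤ (κ₀ η(D) r^D)^{m−1}. -/

import Mathlib

open Metric MeasureTheory ProbabilityTheory
open scoped ENNReal

/-- Volume of the unit ball generalized to real dimension: η(s) = π^{s/2}/Γ(1+s/2). -/
noncomputable def etaVol (s : ℝ) : ℝ := Real.pi ^ (s / 2) / Real.Gamma (1 + s / 2)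

/-- The chain set of length `m`. -/
def chainSet {D : ℕ} (r : ℝ) (m : ℕ) : Set (Fin m → EuclideanSpace ℝ (Fin D)) :=
  {y | ∀ j : ℕ, ∀ hj : j + 1 < m, dist (y ⟨j, Nat.lt_of_succ_lt hj⟩) (y ⟨j + 1, hj⟩) ≤ r}

lemma chainSet_measurable {D : ℕ} (r : ℝ) (m : ℕ) :
    MeasurableSet (chainSet (D := D) r m) := by
  have : chainSet (D := D) r m =
      ⋂ (j : ℕ) (hj : j + 1 < m),
        {y | dist (y ⟨j, Nat.lt_of_succ_lt hj⟩) (y ⟨j + 1, hj⟩) ≤ r} := by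
    ext y; simp [chainSet, Set.mem_iInter]
  rw [this]
  refine MeasurableSet.iInter fun j => MeasurableSet.iInter fun hj => ?_
  exact measurableSet_le
    ((measurable_pi_apply _).dist (measurable_pi_apply _)) measurable_const

lemma chain_pi_bound {D : ℕ} (μ₀ : Measure (EuclideanSpace ℝ (Fin D)))
    [IsProbabilityMeasure μ₀] (r : ℝ) (c : ℝ≥0∞)
    (hball : ∀ x, μ₀ (closedBall x r) ≤ c) :
    ∀ m : ℕ, Measure.pi (fun _ : Fin m => μ₀) (chainSet (D := D) r m) ≤ c ^ (m - 1) := by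
  intro m
  induction m with
  | zero => simpa using prob_le_one
  | succ m ih =>
    rcases Nat.eq_zero_or_pos m with hm | hm
    · subst hm; simpa using prob_le_one
    -- m ≥ 1; split off the last coordinate
    set E := EuclideanSpace ℝ (Fin D)
    set ν : Measure (Fin m → E) := Measure.pi (fun _ : Fin m => μ₀) with hν
    have mp := measurePreserving_piFinSuccAbove (fun _ : Fin (m + 1) => μ₀) (Fin.last m)
    set e := MeasurableEquiv.piFinSuccAbove (fun _ : Fin (m + 1) => E) (Fin.last m) with he
    set S : Set (E × (Fin m → E)) := e.symm ⁻¹' (chainSet (D := D) r (m + 1)) with hS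
    have hSmeas : MeasurableSet S := e.symm.measurable (chainSet_measurable r (m + 1))
    have hTe : chainSet (D := D) r (m + 1) = e ⁻¹' S := by
      rw [hS, ← Set.preimage_comp]
      simp
    have key : Measure.pi (fun _ : Fin (m + 1) => μ₀) (chainSet (D := D) r (m + 1))
        = (μ₀.prod (Measure.pi fun _ : Fin m => μ₀)) S := by
      rw [hTe]
      exact mp.measure_preimage hSmeas.nullMeasurableSet
    rw [key]
    -- slice description
    have hsymm : ∀ (x : E) (z : Fin m → E),
        e.symm (x, z) = Fin.snoc z x := by
      intro x z
      simp [he, MeasurableEquiv.piFinSuccAbove, Fin.insertNthEquiv, Fin.insertNth_last]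
    have slice_bound : ∀ z : Fin m → E,
        μ₀ ((fun x => (x, z)) ⁻¹' S)
          ≤ (chainSet (D := D) r m).indicator (fun _ => c) z := by
      intro z
      by_cases hz : z ∈ chainSet (D := D) r m
      · rw [Set.indicator_of_mem hz]
        refine le_trans (measure_mono ?_) (hball (z ⟨m - 1, Nat.sub_lt hm one_pos⟩))
        intro x hx
        have hx' : (Fin.snoc z x : Fin (m + 1) → E) ∈ chainSet (D := D) r (m + 1) := by
          have := hx
          simpa [hS, hsymm] using this
        have hlt : (m - 1) + 1 < m + 1 := by omega
        have hd := hx' (m - 1) hlt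
        have h1 : (⟨m - 1, Nat.lt_of_succ_lt hlt⟩ : Fin (m + 1))
            = Fin.castSucc ⟨m - 1, Nat.sub_lt hm one_pos⟩ := rfl
        have h2 : (⟨(m - 1) + 1, hlt⟩ : Fin (m + 1)) = Fin.last m := by
          ext; simp; omega
        rw [h1, h2, Fin.snoc_castSucc, Fin.snoc_last] at hd
        simpa [mem_closedBall, dist_comm] using hd
      · rw [Set.indicator_of_notMem hz]
        have : (fun x => (x, z)) ⁻¹' S = (∅ : Set E) := by
          ext x
          simp only [Set.mem_preimage, Set.mem_empty_iff_false, iff_false, hS, hsymm]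
          intro hx
          apply hz
          intro j hj
          have hj' : j + 1 < m + 1 := Nat.lt_succ_of_lt hj
          have hd := hx j hj'
          have h1 : (⟨j, Nat.lt_of_succ_lt hj'⟩ : Fin (m + 1))
              = Fin.castSucc ⟨j, Nat.lt_of_succ_lt hj⟩ := rfl
          have h2 : (⟨j + 1, hj'⟩ : Fin (m + 1)) = Fin.castSucc ⟨j + 1, hj⟩ := rfl
          rw [h1, h2, Fin.snoc_castSucc, Fin.snoc_castSucc] at hd
          exact hd
        rw [this]; simp
    calc (μ₀.prod ν) S = ∫⁻ z, μ₀ ((fun x => (x, z)) ⁻¹' S) ∂ν :=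
          Measure.prod_apply_symm hSmeas
      _ ≤ ∫⁻ z, (chainSet (D := D) r m).indicator (fun _ => c) z ∂ν :=
          lintegral_mono slice_bound
      _ = c * ν (chainSet (D := D) r m) :=
          lintegral_indicator_const (chainSet_measurable r m) c
      _ ≤ c * c ^ (m - 1) := mul_le_mul_right ih c
      _ = c ^ (m + 1 - 1) := by
          rw [← pow_succ']
          congr 1
          omega

theorem stmt11 {D m : ℕ} (hm : 1 ≤ m) (Ω : Type*) [MeasurableSpace Ω]
    (P : Measure Ω) [IsProbabilityMeasure P]
    (Y : Fin m → Ω → EuclideanSpace ℝ (Fin D)) (hmeas : ∀ j, Measurable (Y j))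
    (hindep : iIndepFun Y P)
    (μ₀ : Measure (EuclideanSpace ℝ (Fin D))) [IsProbabilityMeasure μ₀]
    (hlaw : ∀ j, P.map (Y j) = μ₀)
    (κ₀ r : ℝ) (hκ₀ : 0 < κ₀) (hr : 0 < r)
    (hball : ∀ x, μ₀ (closedBall x r) ≤ ENNReal.ofReal (κ₀ * etaVol D * r ^ D)) :
    (P {ω | ∀ j : ℕ, ∀ hj : j + 1 < m,
        dist (Y ⟨j, Nat.lt_of_succ_lt hj⟩ ω) (Y ⟨j + 1, hj⟩ ω) ≤ r}).toReal
      ≤ (κ₀ * etaVol D * r ^ D) ^ (m - 1) := by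
  set C := κ₀ * etaVol D * r ^ D with hC
  have hC0 : 0 < C := by
    have hη : 0 < etaVol D := by
      unfold etaVol
      exact div_pos (Real.rpow_pos_of_pos Real.pi_pos _)
        (Real.Gamma_pos_of_pos (by positivity))
    positivity
  -- law of the vector is the product measure
  have hvec : Measurable fun ω => (fun j => Y j ω) :=
    measurable_pi_iff.2 hmeas
  have hmap : P.map (fun ω => (fun j => Y j ω)) = Measure.pi (fun _ : Fin m => μ₀) := by
    refine (Measure.pi_eq (μ := fun _ : Fin m => μ₀) fun s hs => ?_).symm
    rw [Measure.map_apply hvec (MeasurableSet.univ_pi hs)]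
    have hpre : (fun ω => (fun j => Y j ω)) ⁻¹' (Set.pi Set.univ s)
        = ⋂ j ∈ Finset.univ, Y j ⁻¹' s j := by
      ext ω; simp [Set.mem_pi]
    rw [hpre, (iIndepFun_iff_measure_inter_preimage_eq_mul.1 hindep) Finset.univ
      (fun j _ => hs j)]
    refine Finset.prod_congr rfl fun j _ => ?_
    rw [← hlaw j, Measure.map_apply (hmeas j) (hs j)]
  have hev : {ω | ∀ j : ℕ, ∀ hj : j + 1 < m,
        dist (Y ⟨j, Nat.lt_of_succ_lt hj⟩ ω) (Y ⟨j + 1, hj⟩ ω) ≤ r}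
      = (fun ω => (fun j => Y j ω)) ⁻¹' (chainSet (D := D) r m) := rfl
  have hP : P {ω | ∀ j : ℕ, ∀ hj : j + 1 < m,
        dist (Y ⟨j, Nat.lt_of_succ_lt hj⟩ ω) (Y ⟨j + 1, hj⟩ ω) ≤ r}
      = Measure.pi (fun _ : Fin m => μ₀) (chainSet (D := D) r m) := by
    rw [hev, ← hmap, Measure.map_apply hvec (chainSet_measurable r m)]
  have hbound := chain_pi_bound μ₀ r (ENNReal.ofReal C) hball m
  rw [hP]
  have : (ENNReal.ofReal C) ^ (m - 1) = ENNReal.ofReal (C ^ (m - 1)) :=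
    (ENNReal.ofReal_pow hC0.le _).symm
  rw [this] at hbound
  calc (Measure.pi (fun _ : Fin m => μ₀) (chainSet (D := D) r m)).toReal
      ≤ (ENNReal.ofReal (C ^ (m - 1))).toReal :=
        ENNReal.toReal_mono ENNReal.ofReal_ne_top hbound
    _ = C ^ (m - 1) := ENNReal.toReal_ofReal (by positivity)
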